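/- Let G be a finite group and u a normalized unit of order n in ℤG. Suppose ρ is a complex representation of G affording the character χ, extended linearly to ℤG. Then for each integer ℓ, the multiplicity of ζ_n^ℓ as an eigenvalue of ρ(u) equals (1/n) Σ_{d|n} Tr_{ℚ(ζ_n^d)/ℚ}(χ(u^d) ζ_n^{-dℓ}), and in particular this quantity is a non-negative integer. -/

import Mathlib

open scoped Classical

open Finset Polynomial


lemma fourier_eigen {V : Type*} [AddCommGroup V] [Module ℂ V] [FiniteDimensional ℂ V]
    (A : Module.End ℂ V) {n : ℕ} (hn : 0 < n) (hA : A ^ n = 1)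
    {ζ : ℂ} (hζ : IsPrimitiveRoot ζ n) (j : ℤ) :
    (n : ℂ) * (Module.finrank ℂ (Module.End.eigenspace A (ζ ^ j)) : ℂ)
      = ∑ k ∈ Finset.range n, (LinearMap.trace ℂ V (A ^ k)) * ζ ^ (-(k : ℤ) * j) := by
  have hζ0 : ζ ≠ 0 := hζ.ne_zero hn.ne'
  have hn0 : (n : ℂ) ≠ 0 := Nat.cast_ne_zero.mpr hn.ne'
  set μ : ℂ := ζ ^ j with hμ
  have hcoef : ∀ k : ℕ, ζ ^ (-(k : ℤ) * j) * μ ^ k = 1 := by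
    intro k
    have h0 : (-(k : ℤ) * j + j * k) = 0 := by ring
    rw [hμ, ← zpow_natCast (ζ ^ j), ← zpow_mul, ← zpow_add₀ hζ0, h0, zpow_zero]
  set f : ℕ → Module.End ℂ V := fun k => ζ ^ (-(k : ℤ) * j) • A ^ k with hf
  set S : Module.End ℂ V := ∑ k ∈ Finset.range n, f k with hS
  set P : Module.End ℂ V := (n : ℂ)⁻¹ • S with hP
  have ha : ∀ v ∈ Module.End.eigenspace A μ, P v = v := by
    intro v hv
    rw [Module.End.mem_eigenspace_iff] at hv
    have hpow : ∀ k : ℕ, (A ^ k) v = μ ^ k • v := by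
      intro k
      induction k with
      | zero => simp
      | succ k ih =>
        rw [pow_succ, Module.End.mul_apply, hv, map_smul, ih, smul_smul, ← pow_succ']
    have hterm : ∀ k ∈ Finset.range n, (f k) v = v := by
      intro k _
      show (ζ ^ (-(k : ℤ) * j) • A ^ k) v = v
      rw [LinearMap.smul_apply, hpow, smul_smul, hcoef, one_smul]
    rw [hP, LinearMap.smul_apply, hS, LinearMap.sum_apply, Finset.sum_congr rfl hterm,
      Finset.sum_const, Finset.card_range, ← Nat.cast_smul_eq_nsmul ℂ, smul_smul,
      inv_mul_cancel₀ hn0, one_smul]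
  have hfn : f n = f 0 := by
    have h1 : ζ ^ (-(n : ℤ) * j) = 1 := (hζ.zpow_eq_one_iff_dvd _).mpr ⟨-j, by ring⟩
    show ζ ^ (-(n : ℤ) * j) • A ^ n = ζ ^ (-(0 : ℤ) * j) • A ^ 0
    rw [h1, hA, pow_zero]
    norm_num
  have hshift : ∑ k ∈ Finset.range n, f (k + 1) = S := by
    have h1 := Finset.sum_range_succ' f n
    have h2 := Finset.sum_range_succ f n
    have h3 := h1.symm.trans h2
    rw [hfn] at h3
    exact add_right_cancel h3
  have hAS : A * S = μ • S := by
    calc A * S = ∑ k ∈ Finset.range n, A * f k := by rw [hS, Finset.mul_sum]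
      _ = ∑ k ∈ Finset.range n, μ • f (k + 1) := by
          refine Finset.sum_congr rfl fun k _ => ?_
          show A * (ζ ^ (-(k : ℤ) * j) • A ^ k) = μ • (ζ ^ (-((k:ℕ)+1 : ℤ) * j) • A ^ (k + 1))
          rw [mul_smul_comm, ← pow_succ', smul_smul, hμ, ← zpow_add₀ hζ0]
          congr 2
          push_cast
          ring_nf
      _ = μ • ∑ k ∈ Finset.range n, f (k + 1) := by rw [Finset.smul_sum]
      _ = μ • S := by rw [hshift]
  have hb : ∀ v : V, P v ∈ Module.End.eigenspace A μ := by
    intro v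
    rw [Module.End.mem_eigenspace_iff]
    have h1 : A (P v) = (n : ℂ)⁻¹ • (A * S) v := by
      rw [hP, LinearMap.smul_apply, map_smul, Module.End.mul_apply]
    rw [h1, hAS, LinearMap.smul_apply, hP, LinearMap.smul_apply, smul_comm]
  have hproj : LinearMap.IsProj (Module.End.eigenspace A μ) P := ⟨hb, ha⟩
  have htrP := hproj.trace
  have htrP2 : LinearMap.trace ℂ V P
      = (n : ℂ)⁻¹ * ∑ k ∈ Finset.range n, ζ ^ (-(k : ℤ) * j) * LinearMap.trace ℂ V (A ^ k) := by
    rw [hP, map_smul, hS, map_sum, smul_eq_mul]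
    congr 1
    refine Finset.sum_congr rfl fun k _ => ?_
    show LinearMap.trace ℂ V (ζ ^ (-(k : ℤ) * j) • A ^ k) = _
    rw [map_smul, smul_eq_mul]
  rw [← htrP, htrP2, ← mul_assoc, mul_inv_cancel₀ hn0, one_mul]
  exact Finset.sum_congr rfl fun k _ => mul_comm _ _


lemma geom_sum_prim {n : ℕ} (hn : 0 < n) {ζ : ℂ} (hζ : IsPrimitiveRoot ζ n)
    {t k : ℕ} (ht : t < n) (hk : k < n) :
    ∑ j ∈ Finset.range n, ζ ^ (-(t : ℤ) * (j : ℤ)) * (ζ ^ k) ^ j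
      = if t = k then (n : ℂ) else 0 := by
  have hζ0 : ζ ≠ 0 := hζ.ne_zero hn.ne'
  set w : ℂ := ζ ^ k * (ζ ^ t)⁻¹ with hw
  have hterm : ∀ j : ℕ, ζ ^ (-(t : ℤ) * (j : ℤ)) * (ζ ^ k) ^ j = w ^ j := by
    intro j
    have h2 : ζ ^ (-(t : ℤ) * (j : ℤ)) = ((ζ ^ t)⁻¹) ^ j := by
      rw [neg_mul, zpow_neg, inv_pow]
      congr 1
      rw [← pow_mul, ← zpow_natCast ζ (t * j)]
      congr 1
    rw [hw, mul_pow, h2]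
    ring
  rw [Finset.sum_congr rfl fun j _ => hterm j]
  by_cases h : t = k
  · subst h
    have hw1 : w = 1 := mul_inv_cancel₀ (pow_ne_zero _ hζ0)
    simp [hw1, if_pos rfl]
  · rw [if_neg h]
    have hw1 : w ≠ 1 := by
      intro hc
      apply h
      have : ζ ^ k = ζ ^ t := by
        rw [hw, mul_inv_eq_one₀ (pow_ne_zero _ hζ0)] at hc
        exact hc
      exact (hζ.pow_inj hk ht this).symm
    have hwn : w ^ n = 1 := by
      have h1 : (ζ ^ k) ^ n = 1 := by rw [← pow_mul, mul_comm, pow_mul, hζ.pow_eq_one, one_pow]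
      have h2 : (ζ ^ t) ^ n = 1 := by rw [← pow_mul, mul_comm, pow_mul, hζ.pow_eq_one, one_pow]
      rw [hw, mul_pow, h1, inv_pow, h2, inv_one, one_mul]
    have hgeo := geom_sum_mul w n
    rw [hwn, sub_self] at hgeo
    rcases mul_eq_zero.mp hgeo with h' | h'
    · exact h'
    · exact absurd (sub_eq_zero.mp h') hw1

lemma trace_pow_eq {V : Type*} [AddCommGroup V] [Module ℂ V] [FiniteDimensional ℂ V]
    (A : Module.End ℂ V) {n : ℕ} (hn : 0 < n) (hA : A ^ n = 1)
    {ζ : ℂ} (hζ : IsPrimitiveRoot ζ n) (k : ℕ) :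
    LinearMap.trace ℂ V (A ^ k) = ∑ j ∈ Finset.range n,
      ((Module.finrank ℂ (Module.End.eigenspace A (ζ ^ ((j : ℕ) : ℤ))) : ℂ)) * (ζ ^ k) ^ j := by
  have hn0 : (n : ℂ) ≠ 0 := Nat.cast_ne_zero.mpr hn.ne'
  -- reduce to k % n
  have hzk : ζ ^ k = ζ ^ (k % n) := by
    conv_lhs => rw [← Nat.div_add_mod k n]
    rw [pow_add, pow_mul, hζ.pow_eq_one, one_pow, one_mul]
  have hAk : A ^ k = A ^ (k % n) := by
    conv_lhs => rw [← Nat.div_add_mod k n]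
    rw [pow_add, pow_mul, hA, one_pow, one_mul]
  rw [hzk, hAk]
  have hk' : k % n < n := Nat.mod_lt _ hn
  set k' := k % n
  -- now k' < n
  have key : ∀ j : ℕ, (Module.finrank ℂ (Module.End.eigenspace A (ζ ^ ((j : ℕ) : ℤ))) : ℂ)
      = (n : ℂ)⁻¹ * ∑ t ∈ Finset.range n, (LinearMap.trace ℂ V (A ^ t)) * ζ ^ (-(t : ℤ) * (j : ℤ)) := by
    intro j
    rw [← fourier_eigen A hn hA hζ (j : ℤ), ← mul_assoc, inv_mul_cancel₀ hn0, one_mul]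
  calc LinearMap.trace ℂ V (A ^ k')
      = (n : ℂ)⁻¹ * ((LinearMap.trace ℂ V (A ^ k')) * (n : ℂ)) := by
        field_simp
    _ = (n : ℂ)⁻¹ * ∑ t ∈ Finset.range n,
          (LinearMap.trace ℂ V (A ^ t)) * (if t = k' then (n : ℂ) else 0) := by
        congr 1
        rw [Finset.sum_eq_single k']
        · rw [if_pos rfl]
        · intro t _ hne
          rw [if_neg hne, mul_zero]
        · intro habs
          exact absurd (Finset.mem_range.mpr hk') habs
    _ = (n : ℂ)⁻¹ * ∑ t ∈ Finset.range n, (LinearMap.trace ℂ V (A ^ t)) *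
          ∑ j ∈ Finset.range n, ζ ^ (-(t : ℤ) * (j : ℤ)) * (ζ ^ k') ^ j := by
        congr 1
        refine Finset.sum_congr rfl fun t htr => ?_
        rw [geom_sum_prim hn hζ (Finset.mem_range.mp htr) hk']
    _ = ∑ j ∈ Finset.range n, ((n : ℂ)⁻¹ * ∑ t ∈ Finset.range n,
          (LinearMap.trace ℂ V (A ^ t)) * ζ ^ (-(t : ℤ) * (j : ℤ))) * (ζ ^ k') ^ j := by
        simp only [Finset.mul_sum, Finset.sum_mul]
        rw [Finset.sum_comm]
        exact Finset.sum_congr rfl fun j _ => Finset.sum_congr rfl fun t _ => by ring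
    _ = ∑ j ∈ Finset.range n,
          ((Module.finrank ℂ (Module.End.eigenspace A (ζ ^ ((j : ℕ) : ℤ))) : ℂ)) * (ζ ^ k') ^ j := by
        refine Finset.sum_congr rfl fun j _ => ?_
        rw [key j]


set_option maxHeartbeats 1000000 in
lemma divisor_trace_sum {n : ℕ} (hn : 0 < n) {ζ : ℂ} (hζ : IsPrimitiveRoot ζ n)
    (c : ℕ → ℕ) (ℓ : ℤ) {d : ℕ} (hd : d ∣ n) (hd0 : 0 < d) :
    ∃ h : (∑ j ∈ Finset.range n, (c j : ℂ) * (ζ ^ d) ^ j) * ζ ^ (-((d : ℤ) * ℓ)) ∈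
        IntermediateField.adjoin ℚ ({ζ ^ d} : Set ℂ),
      algebraMap ℚ ℂ (Algebra.trace ℚ (IntermediateField.adjoin ℚ ({ζ ^ d} : Set ℂ))
          ⟨(∑ j ∈ Finset.range n, (c j : ℂ) * (ζ ^ d) ^ j) * ζ ^ (-((d : ℤ) * ℓ)), h⟩)
        = ∑ k ∈ (Finset.range n).filter (fun k => Nat.gcd k n = d),
            (∑ j ∈ Finset.range n, (c j : ℂ) * (ζ ^ k) ^ j) * ζ ^ (-((k : ℤ) * ℓ)) := by
  classical
  have hζ0 : ζ ≠ 0 := hζ.ne_zero hn.ne'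
  set m := n / d with hmdef
  have hdm : d * m = n := Nat.mul_div_cancel' hd
  have hm0 : 0 < m := Nat.div_pos (Nat.le_of_dvd hn hd) hd0
  have hξ : IsPrimitiveRoot (ζ ^ d) m := hζ.pow hn hdm.symm
  have hint : IsIntegral ℚ (ζ ^ d) := (hξ.isIntegral hm0).tower_top
  haveI : FiniteDimensional ℚ (IntermediateField.adjoin ℚ ({ζ ^ d} : Set ℂ)) :=
    IntermediateField.adjoin.finiteDimensional hint
  have hmin : minpoly ℚ (ζ ^ d) = cyclotomic m ℚ := (cyclotomic_eq_minpoly_rat hξ hm0).symm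
  -- exponent e with (ζ^k)^e = ζ^(-(k ℓ)) for d ∣ k
  set e : ℕ := ((-ℓ) % (m : ℤ)).toNat with he
  have hm0' : (m : ℤ) ≠ 0 := by exact_mod_cast hm0.ne'
  have he' : (e : ℤ) = (-ℓ) % (m : ℤ) := Int.toNat_of_nonneg (Int.emod_nonneg _ hm0')
  have hme : (m : ℤ) ∣ ((e : ℤ) + ℓ) := ⟨-((-ℓ) / (m : ℤ)), by rw [he', Int.emod_def]; ring⟩
  have hexp : ∀ k : ℕ, d ∣ k → (ζ ^ k) ^ e = ζ ^ (-((k : ℤ) * ℓ)) := by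
    intro k hk
    obtain ⟨c', hc'⟩ := hk
    obtain ⟨t, ht⟩ := hme
    have hnd : (n : ℤ) ∣ ((k : ℤ) * e + (k : ℤ) * ℓ) := by
      refine ⟨(c' : ℤ) * t, ?_⟩
      have h1 : (k : ℤ) = (d : ℤ) * (c' : ℤ) := by exact_mod_cast hc'
      have h2 : (n : ℤ) = (d : ℤ) * (m : ℤ) := by exact_mod_cast hdm.symm
      calc (k : ℤ) * e + (k : ℤ) * ℓ = (k : ℤ) * ((e : ℤ) + ℓ) := by ring
        _ = (d : ℤ) * (c' : ℤ) * ((m : ℤ) * t) := by rw [← h1, ← ht]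
        _ = (n : ℤ) * ((c' : ℤ) * t) := by rw [h2]; ring
    have h1 : (ζ ^ k) ^ e = ζ ^ ((k : ℤ) * (e : ℤ)) := by
      rw [← pow_mul, ← zpow_natCast ζ (k * e)]
      congr 1
    rw [h1]
    calc ζ ^ ((k : ℤ) * (e : ℤ))
        = ζ ^ (((k : ℤ) * e + (k : ℤ) * ℓ) + -((k : ℤ) * ℓ)) := by congr 1; ring
      _ = ζ ^ ((k : ℤ) * e + (k : ℤ) * ℓ) * ζ ^ (-((k : ℤ) * ℓ)) := zpow_add₀ hζ0 _ _
      _ = ζ ^ (-((k : ℤ) * ℓ)) := by rw [(hζ.zpow_eq_one_iff_dvd _).mpr hnd, one_mul]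
  set K := IntermediateField.adjoin ℚ ({ζ ^ d} : Set ℂ) with hK
  set gen : K := IntermediateField.AdjoinSimple.gen ℚ (ζ ^ d) with hgen
  have hgenval : (algebraMap K ℂ) gen = ζ ^ d := IntermediateField.AdjoinSimple.algebraMap_gen ℚ _
  set XX : K := (∑ j ∈ Finset.range n, (c j : K) * gen ^ j) * gen ^ e with hXX
  have hXXval : (algebraMap K ℂ) XX
      = (∑ j ∈ Finset.range n, (c j : ℂ) * (ζ ^ d) ^ j) * ζ ^ (-((d : ℤ) * ℓ)) := by
    rw [hXX, map_mul, map_sum, map_pow, hgenval, hexp d dvd_rfl]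
    congr 1
  have hcoe : ∀ y : K, (algebraMap K ℂ) y = (y : ℂ) := fun y => rfl
  have hmem : (∑ j ∈ Finset.range n, (c j : ℂ) * (ζ ^ d) ^ j) * ζ ^ (-((d : ℤ) * ℓ)) ∈ K := by
    rw [← hXXval, hcoe]
    exact XX.2
  refine ⟨hmem, ?_⟩
  have hsub : (⟨(∑ j ∈ Finset.range n, (c j : ℂ) * (ζ ^ d) ^ j) * ζ ^ (-((d : ℤ) * ℓ)), hmem⟩ : K)
      = XX := by
    apply Subtype.ext
    rw [← hcoe XX, hXXval]
  rw [hsub]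
  haveI := Algebra.IsAlgebraic.of_finite ℚ K
  rw [trace_eq_sum_embeddings (E := ℂ)]
  have hroot : ∀ k ∈ (Finset.range n).filter (fun k => Nat.gcd k n = d),
      ζ ^ k ∈ (minpoly ℚ (ζ ^ d)).aroots ℂ := by
    intro k hk
    simp only [Finset.mem_filter, Finset.mem_range] at hk
    have hdk : d ∣ k := hk.2 ▸ Nat.gcd_dvd_left k n
    obtain ⟨c', rfl⟩ := hdk
    have hcop : Nat.Coprime c' m := by
      have h1 : d * Nat.gcd c' m = d * 1 := by
        rw [← Nat.gcd_mul_left, hdm, mul_one]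
        exact hk.2
      exact Nat.eq_of_mul_eq_mul_left hd0 h1
    have hprim : IsPrimitiveRoot (ζ ^ (d * c')) m := by
      rw [pow_mul]
      exact (hξ.pow_iff_coprime hm0 c').mpr hcop
    rw [hmin, mem_aroots]
    refine ⟨cyclotomic_ne_zero m ℚ, ?_⟩
    rw [aeval_def, ← eval_map, map_cyclotomic]
    exact hprim.isRoot_cyclotomic hm0
  set E := IntermediateField.algHomAdjoinIntegralEquiv ℚ (K := ℂ) hint with hE
  have hd_of_mem : ∀ k ∈ (Finset.range n).filter (fun k => Nat.gcd k n = d), d ∣ k := by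
    intro k hk
    simp only [Finset.mem_filter] at hk
    exact hk.2 ▸ Nat.gcd_dvd_left k n
  refine (Finset.sum_bij (fun k hk => E.symm ⟨ζ ^ k, hroot k hk⟩) (fun _ _ => Finset.mem_univ _)
    ?_ ?_ ?_).symm
  · intro a ha b hb hab
    have := E.symm.injective hab
    have h2 : ζ ^ a = ζ ^ b := congrArg Subtype.val this
    simp only [Finset.mem_filter, Finset.mem_range] at ha hb
    exact hζ.pow_inj ha.1 hb.1 h2
  · intro σ _
    set r := E σ with hr
    have hσ : σ = E.symm r := (E.symm_apply_apply σ).symm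
    obtain ⟨rr, hrr⟩ : ∃ rr : ℂ, rr = (r : ℂ) := ⟨(r : ℂ), rfl⟩
    have hr3 : (Polynomial.aeval rr) (minpoly ℚ (ζ ^ d)) = 0 := by
      rw [hrr]
      exact (Polynomial.mem_aroots'.mp r.2).2
    rw [hmin] at hr3
    have hroot2 : IsRoot (cyclotomic m ℂ) rr := by
      rwa [aeval_def, ← eval_map, map_cyclotomic] at hr3
    haveI : NeZero ((m : ℕ) : ℂ) := ⟨Nat.cast_ne_zero.mpr hm0.ne'⟩
    have hrprim : IsPrimitiveRoot rr m := isRoot_cyclotomic_iff.mp hroot2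
    haveI : NeZero m := ⟨hm0.ne'⟩
    obtain ⟨cc, hcc, hval⟩ := hξ.eq_pow_of_pow_eq_one hrprim.pow_eq_one
    have hcop : cc.Coprime m := (hξ.pow_iff_coprime hm0 cc).mp (hval ▸ hrprim)
    refine ⟨d * cc, ?_, ?_⟩
    · simp only [Finset.mem_filter, Finset.mem_range]
      constructor
      · calc d * cc < d * m := by
              have h := Nat.mul_le_mul_left d (Nat.succ_le_of_lt hcc)
              rw [Nat.mul_succ] at h
              linarith
          _ = n := hdm
      · rw [← hdm, Nat.gcd_mul_left, hcop, mul_one]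
    · rw [hσ]
      exact congrArg E.symm (Subtype.ext (show ζ ^ (d * cc) = (r : ℂ) by
        rw [pow_mul, hval, hrr]))
  · intro k hk
    have hgv : (E.symm ⟨ζ ^ k, hroot k hk⟩) gen = ζ ^ k := by
      rw [hgen]
      exact IntermediateField.algHomAdjoinIntegralEquiv_symm_apply_gen ℚ hint _
    show _ = (E.symm ⟨ζ ^ k, hroot k hk⟩) XX
    rw [hXX, map_mul, map_sum, map_pow, hgv, hexp k (hd_of_mem k hk)]
    congr 1
    refine Finset.sum_congr rfl fun j _ => ?_
    rw [map_mul, map_pow, hgv, map_natCast]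


/-- The Luthar–Passi (HeLP) multiplicity formula (2.2): let `u` be a normalized
unit of order `n` in `ℤG`, `ρ` a complex representation of `G` (extended linearly
to the group ring, `T d` being the image of `u^d`), `ζ` a primitive `n`-th root
of unity. Then for each `ℓ` the multiplicity of `ζ^ℓ` as an eigenvalue of `ρ(u)`
equals `(1/n) ∑_{d ∣ n} Tr_{ℚ(ζ^d)/ℚ}(χ(u^d) ζ^{-dℓ})`; in particular this
quantity is a non-negative integer. -/
theorem help_multiplicity_formula {G : Type*} [Group G] [Fintype G]
    {V : Type*} [AddCommGroup V] [Module ℂ V] [FiniteDimensional ℂ V]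
    (ρ : Representation ℂ G V)
    (u : MonoidAlgebra ℤ G) (hu : IsUnit u) (haug : ∑ g : G, u.coeff g = 1)
    (n : ℕ) (hn : 0 < n) (hord : orderOf u = n)
    (ζ : ℂ) (hζ : IsPrimitiveRoot ζ n) (ℓ : ℤ)
    (T : ℕ → Module.End ℂ V)
    (hT : ∀ d : ℕ, T d = ∑ g : G, (((u ^ d).coeff g : ℤ) : ℂ) • ρ g) :
    (Module.finrank ℂ (Module.End.eigenspace (T 1) (ζ ^ ℓ)) : ℚ)
      = (n : ℚ)⁻¹ * ∑ d ∈ n.divisors,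
          (if h : (LinearMap.trace ℂ V (T d)) * ζ ^ (-((d : ℤ) * ℓ)) ∈
              IntermediateField.adjoin ℚ ({ζ ^ d} : Set ℂ) then
            Algebra.trace ℚ (IntermediateField.adjoin ℚ ({ζ ^ d} : Set ℂ))
              ⟨(LinearMap.trace ℂ V (T d)) * ζ ^ (-((d : ℤ) * ℓ)), h⟩
          else 0) := by
  classical
  have hn0 : (n : ℂ) ≠ 0 := Nat.cast_ne_zero.mpr hn.ne'
  let φ : MonoidAlgebra ℤ G →+* Module.End ℂ V :=
    MonoidAlgebra.liftNCRingHom (Int.castRingHom (Module.End ℂ V)) ρ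
      (fun x y => Int.cast_commute x _)
  have hφ : ∀ w : MonoidAlgebra ℤ G, φ w = ∑ g : G, ((w.coeff g : ℤ) : ℂ) • ρ g := by
    intro w
    conv_lhs => rw [← MonoidAlgebra.sum_coeff_single w]
    rw [Finsupp.sum, map_sum]
    rw [Finset.sum_subset (Finset.subset_univ w.coeff.support)]
    · refine Finset.sum_congr rfl fun g _ => ?_
      show MonoidAlgebra.liftNC _ _ (MonoidAlgebra.single g (w.coeff g)) = _
      rw [MonoidAlgebra.liftNC_single]
      show ((w.coeff g : ℤ) : Module.End ℂ V) * ρ g = _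
      rw [← zsmul_eq_mul, ← Int.cast_smul_eq_zsmul ℂ]
    · intro g _ hg
      simp only [Finsupp.notMem_support_iff] at hg
      simp [hg]
  have hTφ : ∀ k : ℕ, T k = φ (u ^ k) := fun k => by rw [hT k, hφ]
  set A : Module.End ℂ V := T 1 with hA1
  have hTd : ∀ d : ℕ, T d = A ^ d := by
    intro d
    rw [hTφ d, hA1, hTφ 1, pow_one, ← map_pow]
  have hun : u ^ n = 1 := by rw [← hord]; exact pow_orderOf_eq_one u
  have hAn : A ^ n = 1 := by rw [← hTd n, hTφ n, hun, map_one]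
  set mfun : ℕ → ℕ :=
    fun j => Module.finrank ℂ (Module.End.eigenspace A (ζ ^ ((j : ℕ) : ℤ))) with hmfun
  have htr : ∀ k : ℕ, LinearMap.trace ℂ V (A ^ k)
      = ∑ j ∈ Finset.range n, (mfun j : ℂ) * (ζ ^ k) ^ j := by
    intro k
    rw [trace_pow_eq A hn hAn hζ k]
  simp only [hTd, htr, pow_one]
  -- pass to ℂ
  have hQC : Function.Injective (fun q : ℚ => (q : ℂ)) := Rat.cast_injective
  apply hQC
  simp only []
  push_cast [Rat.cast_sum, Rat.cast_mul, Rat.cast_inv, Rat.cast_natCast]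
  have hterm : ∀ d ∈ n.divisors,
      (((if h : (∑ j ∈ Finset.range n, (mfun j : ℂ) * (ζ ^ d) ^ j) * ζ ^ (-((d : ℤ) * ℓ)) ∈
              IntermediateField.adjoin ℚ ({ζ ^ d} : Set ℂ) then
            Algebra.trace ℚ (IntermediateField.adjoin ℚ ({ζ ^ d} : Set ℂ))
              ⟨(∑ j ∈ Finset.range n, (mfun j : ℂ) * (ζ ^ d) ^ j) * ζ ^ (-((d : ℤ) * ℓ)), h⟩
          else 0 : ℚ)) : ℂ)
        = ∑ k ∈ (Finset.range n).filter (fun k => Nat.gcd k n = d),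
            (∑ j ∈ Finset.range n, (mfun j : ℂ) * (ζ ^ k) ^ j) * ζ ^ (-((k : ℤ) * ℓ)) := by
    intro d hd
    obtain ⟨hx, he⟩ := divisor_trace_sum hn hζ mfun ℓ (Nat.mem_divisors.mp hd).1
      (Nat.pos_of_mem_divisors hd)
    rw [dif_pos hx, ← he]
    exact (eq_ratCast (algebraMap ℚ ℂ) _).symm
  rw [Finset.sum_congr rfl hterm]
  have hmaps : ∀ k ∈ Finset.range n, Nat.gcd k n ∈ n.divisors := by
    intro k _
    exact Nat.mem_divisors.mpr ⟨Nat.gcd_dvd_right k n, hn.ne'⟩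
  rw [Finset.sum_fiberwise_of_maps_to hmaps]
  have hsum : ∑ k ∈ Finset.range n,
      (∑ j ∈ Finset.range n, (mfun j : ℂ) * (ζ ^ k) ^ j) * ζ ^ (-((k : ℤ) * ℓ))
      = (n : ℂ) * (Module.finrank ℂ (Module.End.eigenspace A (ζ ^ ℓ)) : ℂ) := by
    rw [fourier_eigen A hn hAn hζ ℓ]
    refine Finset.sum_congr rfl fun k _ => ?_
    rw [← htr k, neg_mul]
  rw [hsum, ← mul_assoc, inv_mul_cancel₀ hn0, one_mul]
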